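/- Let L = {0,1}^ℝ with the product topology and let (h_n) be a sequence that is dense in L. Then the set K = (L × {0}) ∪ { (h_n, 1/n) : n ∈ ℕ }, as a subspace of L × ℝ, is compact, each point (h_n, 1/n) is isolated in K, and the singletons {(h_n, 1/n)} form a countable π-basis for K. -/

import Mathlib

open Metric ZeroAtInfty
open scoped ENNReal

/-- A normed space has the ball-covering property (BCP) if there is a countable family of
closed balls, none containing the origin (`0 < r n < ‖c n‖`), covering the unit sphere. -/
def HasBCP (X : Type*) [NormedAddCommGroup X] : Prop :=
  ∃ (c : ℕ → X) (r : ℕ → ℝ),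
    (∀ n, 0 < r n ∧ r n < ‖c n‖) ∧
    sphere (0 : X) 1 ⊆ ⋃ n, closedBall (c n) (r n)

/-- The strong ball-covering property: the radii are uniformly bounded above. -/
def HasSBCP (X : Type*) [NormedAddCommGroup X] : Prop :=
  ∃ (c : ℕ → X) (r : ℕ → ℝ),
    (∀ n, 0 < r n ∧ r n < ‖c n‖) ∧
    (∃ M : ℝ, ∀ n, r n ≤ M) ∧
    sphere (0 : X) 1 ⊆ ⋃ n, closedBall (c n) (r n)

/-- The uniform ball-covering property: strong BCP together with a closed ball around the
origin disjoint from all the balls of the covering. -/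
def HasUBCP (X : Type*) [NormedAddCommGroup X] : Prop :=
  ∃ (c : ℕ → X) (r : ℕ → ℝ),
    (∀ n, 0 < r n ∧ r n < ‖c n‖) ∧
    (∃ M : ℝ, ∀ n, r n ≤ M) ∧
    (∃ ρ : ℝ, 0 < ρ ∧ ∀ n, Disjoint (closedBall (0 : X) ρ) (closedBall (c n) (r n))) ∧
    sphere (0 : X) 1 ⊆ ⋃ n, closedBall (c n) (r n)

/-- A topological space has a countable π-basis if there is a countable family of nonempty
open sets such that every nonempty open set contains a member of the family. -/
def HasCountablePiBasis (K : Type*) [TopologicalSpace K] : Prop :=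
  ∃ B : Set (Set K), B.Countable ∧ (∀ U ∈ B, IsOpen U ∧ U.Nonempty) ∧
    ∀ V : Set K, IsOpen V → V.Nonempty → ∃ U ∈ B, U ⊆ V

lemma aux_one_div_nat_eq (m n : ℕ) (hm : 0 < m) (hn : 0 < n)
    (hlt : |1/(m:ℝ) - 1/(n:ℝ)| < 1/(n:ℝ) - 1/((n:ℝ)+1)) : m = n := by
  have hm' : (1:ℝ) ≤ m := by exact_mod_cast hm
  have hn' : (1:ℝ) ≤ n := by exact_mod_cast hn
  rw [abs_lt] at hlt
  obtain ⟨h1, h2⟩ := hlt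
  by_contra hne
  rcases lt_or_gt_of_ne hne with H | H
  · have hmn : (m:ℝ) + 1 ≤ n := by exact_mod_cast H
    have e1 : 1/(n:ℝ) ≤ 1/((m:ℝ)+1) := one_div_le_one_div_of_le (by linarith) hmn
    have q1 : 1/(m:ℝ) - 1/((m:ℝ)+1) = 1/((m:ℝ)*((m:ℝ)+1)) := by
      field_simp
      ring
    have q2 : 1/(n:ℝ) - 1/((n:ℝ)+1) = 1/((n:ℝ)*((n:ℝ)+1)) := by
      field_simp
      ring
    have q3 : 1/((n:ℝ)*((n:ℝ)+1)) ≤ 1/((m:ℝ)*((m:ℝ)+1)) := by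
      apply one_div_le_one_div_of_le
      · nlinarith
      · nlinarith
    linarith
  · have hmn : (n:ℝ) + 1 ≤ m := by exact_mod_cast H
    have e1 : 1/(m:ℝ) ≤ 1/((n:ℝ)+1) := one_div_le_one_div_of_le (by linarith) hmn
    linarith

lemma aux_zero_far (n : ℕ) (hn : 0 < n)
    (hlt : |(0:ℝ) - 1/(n:ℝ)| < 1/(n:ℝ) - 1/((n:ℝ)+1)) : False := by
  have hn' : (0:ℝ) < n := by exact_mod_cast hn
  rw [zero_sub, abs_neg, abs_of_pos (by positivity)] at hlt
  have : (0:ℝ) < 1/((n:ℝ)+1) := by positivity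
  linarith

lemma aux_eps_pos (n : ℕ) (hn : 0 < n) : 0 < 1/(n:ℝ) - 1/((n:ℝ)+1) := by
  have hn' : (0:ℝ) < n := by exact_mod_cast hn
  rw [sub_pos]
  apply one_div_lt_one_div_of_lt hn'
  linarith

lemma aux_dense_tail (h : ℕ → ℝ → Bool) (hd : DenseRange h)
    (U : Set (ℝ → Bool)) (hU : IsOpen U) (hne : U.Nonempty) (N : ℕ) :
    ∃ n, N < n ∧ h n ∈ U := by
  obtain ⟨x, hx⟩ := hne
  obtain ⟨I, u, hu, hsub⟩ := isOpen_pi_iff.mp hU x hx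
  have hIinf : ((I : Set ℝ))ᶜ.Infinite := I.finite_toSet.infinite_compl
  have hinjOn : Set.InjOn (fun r : ℝ => Function.update x r (!x r)) ((I : Set ℝ))ᶜ := by
    intro r _ r' _ he
    by_contra hne'
    have h1 := congrFun he r
    have h2 : Function.update x r (!x r) r = !x r := Function.update_self _ _ _
    have h3 : Function.update x r' (!x r') r = x r := Function.update_of_ne hne' _ _
    simp only at h1
    rw [h2, h3] at h1
    simp at h1
  have hSsub : (fun r : ℝ => Function.update x r (!x r)) '' ((I : Set ℝ))ᶜ ⊆ U := by
    rintro - ⟨r, hr, rfl⟩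
    apply hsub
    intro i hi
    show Function.update x r (!x r) i ∈ u i
    rw [Function.update_of_ne (show i ≠ r by rintro rfl; exact hr hi)]
    exact (hu i hi).2
  have hG : (h '' (Set.Iic N)).Finite := (Set.finite_Iic N).image _
  have hU' : IsOpen (U \ h '' (Set.Iic N)) := hU.sdiff hG.isClosed
  have hne' : (U \ h '' (Set.Iic N)).Nonempty := by
    obtain ⟨y, hy⟩ := ((hIinf.image hinjOn).diff hG).nonempty
    exact ⟨y, hSsub hy.1, hy.2⟩
  obtain ⟨n, hn⟩ := hd.exists_mem_open hU' hne'
  refine ⟨n, ?_, hn.1⟩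
  by_contra hle
  exact hn.2 ⟨n, by simpa using Nat.le_of_not_lt hle, rfl⟩
theorem compact_with_countable_pi_basis_of_isolated_points
    (h : ℕ → ℝ → Bool) (hd : DenseRange h) :
    let K : Set ((ℝ → Bool) × ℝ) :=
      {p | p.2 = 0} ∪ {p | ∃ n : ℕ, 0 < n ∧ p = (h n, 1 / (n : ℝ))}
    IsCompact K ∧
    (∀ x : K, (∃ n : ℕ, 0 < n ∧ (x : (ℝ → Bool) × ℝ) = (h n, 1 / (n : ℝ))) →
      IsOpen ({x} : Set K)) ∧
    (∀ V : Set K, IsOpen V → V.Nonempty →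
      ∃ x : K, (∃ n : ℕ, 0 < n ∧ (x : (ℝ → Bool) × ℝ) = (h n, 1 / (n : ℝ))) ∧
        ({x} : Set K) ⊆ V) := by
  intro K
  set T : Set ℝ := insert 0 (Set.range fun n : ℕ => 1/(n:ℝ)) with hTdef
  have hTc : IsCompact T := tendsto_one_div_atTop_nhds_zero_nat.isCompact_insert_range
  have hKT : K ⊆ Set.univ ×ˢ T := by
    rintro p (hp | ⟨n, hn, rfl⟩)
    · exact ⟨trivial, by rw [hp]; exact Set.mem_insert _ _⟩
    · exact ⟨trivial, Set.mem_insert_iff.mpr (Or.inr ⟨n, rfl⟩)⟩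
  have hKclosed : IsClosed K := by
    rw [← isOpen_compl_iff, isOpen_iff_forall_mem_open]
    intro p hp
    have hp2 : p.2 ≠ 0 := fun h0 => hp (Or.inl h0)
    by_cases hpT : p.2 ∈ T
    · rcases Set.mem_insert_iff.mp hpT with h0 | ⟨n, hn⟩
      · exact absurd h0 hp2
      have hn0 : 0 < n := by
        rcases Nat.eq_zero_or_pos n with rfl | hpos
        · exact absurd (by rw [← hn]; simp) hp2
        · exact hpos
      have hph : p.1 ≠ h n := by
        intro he
        exact hp (Or.inr ⟨n, hn0, Prod.ext he hn.symm⟩)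
      refine ⟨{h n}ᶜ ×ˢ Metric.ball (1/(n:ℝ)) (1/(n:ℝ) - 1/((n:ℝ)+1)), ?_,
        isClosed_singleton.isOpen_compl.prod Metric.isOpen_ball, hph, ?_⟩
      · intro q hq
        simp only [Set.mem_compl_iff]
        intro hqK
        obtain ⟨hq1, hq2⟩ := hq
        rcases hqK with h0 | ⟨m, hm, hqm⟩
        · rw [Metric.mem_ball, h0, Real.dist_eq] at hq2
          exact aux_zero_far n hn0 hq2
        · have hq2' : q.2 = 1/(m:ℝ) := by rw [hqm]
          rw [Metric.mem_ball, hq2', Real.dist_eq] at hq2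
          have hmn := aux_one_div_nat_eq m n hm hn0 hq2
          subst hmn
          exact hq1 (by rw [hqm]; rfl)
      · rw [Metric.mem_ball, ← hn, dist_self]
        exact aux_eps_pos n hn0
    · refine ⟨Set.univ ×ˢ Tᶜ, ?_, isOpen_univ.prod hTc.isClosed.isOpen_compl,
        trivial, hpT⟩
      intro q hq hqK
      exact hq.2 ((hKT hqK).2)
  refine ⟨(isCompact_univ.prod hTc).of_isClosed_subset hKclosed hKT, ?_, ?_⟩
  · intro x hx
    obtain ⟨n, hn, hxval⟩ := hx
    have hset : ({x} : Set K) =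
        Subtype.val ⁻¹' (Set.univ ×ˢ Metric.ball (1/(n:ℝ)) (1/(n:ℝ) - 1/((n:ℝ)+1))) := by
      ext y
      simp only [Set.mem_singleton_iff, Set.mem_preimage, Set.mem_prod, Set.mem_univ,
        true_and, Metric.mem_ball]
      constructor
      · rintro rfl
        have : (y : (ℝ → Bool) × ℝ).2 = 1/(n:ℝ) := by rw [hxval]
        rw [this, dist_self]
        exact aux_eps_pos n hn
      · intro hy
        rcases y.2 with h0 | ⟨m, hm, hym⟩
        · exfalso
          rw [h0, Real.dist_eq] at hy
          exact aux_zero_far n hn hy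
        · have hy2 : (y : (ℝ → Bool) × ℝ).2 = 1/(m:ℝ) := by rw [hym]
          rw [hy2, Real.dist_eq] at hy
          have hmn := aux_one_div_nat_eq m n hm hn hy
          subst hmn
          exact Subtype.ext (by rw [hym, hxval])
    rw [hset]
    exact (isOpen_univ.prod Metric.isOpen_ball).preimage continuous_subtype_val
  · intro V hV hVne
    obtain ⟨x, hx⟩ := hVne
    rcases x.2 with h0 | hmem
    · obtain ⟨W, hWopen, hWeq⟩ := isOpen_induced_iff.mp hV
      have hxW : (x : (ℝ → Bool) × ℝ) ∈ W := by
        rw [← hWeq] at hx; exact hx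
      have hxpair : (x : (ℝ → Bool) × ℝ) = ((x : (ℝ → Bool) × ℝ).1, (0:ℝ)) := by
        rw [← h0]
      have hWnhds : W ∈ nhds ((x : (ℝ → Bool) × ℝ).1, (0:ℝ)) := by
        rw [← hxpair]; exact hWopen.mem_nhds hxW
      obtain ⟨u, hu, v, hv, huv⟩ := mem_nhds_prod_iff.mp hWnhds
      obtain ⟨δ, hδ, hball⟩ := Metric.mem_nhds_iff.mp hv
      obtain ⟨U, hUu, hUopen, hxU⟩ := mem_nhds_iff.mp hu
      obtain ⟨n, hNn, hnU⟩ := aux_dense_tail h hd U hUopen ⟨_, hxU⟩ (Nat.ceil (1/δ))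
      have hn0 : 0 < n := Nat.lt_of_le_of_lt (Nat.zero_le _) hNn
      have hnpos : (0:ℝ) < n := by exact_mod_cast hn0
      have hδn : 1/(n:ℝ) < δ := by
        have h1 : (1/δ : ℝ) ≤ (Nat.ceil (1/δ) : ℝ) := Nat.le_ceil _
        have h2 : ((Nat.ceil (1/δ) : ℕ) : ℝ) < n := by exact_mod_cast hNn
        exact (one_div_lt hnpos hδ).mpr (lt_of_le_of_lt h1 h2)
      have hmemW : (h n, 1/(n:ℝ)) ∈ W := by
        apply huv
        refine ⟨hUu hnU, hball ?_⟩
        rw [Metric.mem_ball, Real.dist_eq, sub_zero, abs_of_pos (by positivity)]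
        exact hδn
      have hmemK : (h n, 1/(n:ℝ)) ∈ K := Or.inr ⟨n, hn0, rfl⟩
      refine ⟨⟨_, hmemK⟩, ⟨n, hn0, rfl⟩, ?_⟩
      rw [Set.singleton_subset_iff, ← hWeq]
      exact hmemW
    · exact ⟨x, hmem, Set.singleton_subset_iff.mpr hx⟩
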